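/- Any two traceless Hermitian matrices M₁, M₂ ∈ ℂ^{d×d} can be simultaneously zero-diagonalized: there exists a unitary U ∈ ℂ^{d×d} such that all diagonal entries of U† M₁ U and of U† M₂ U are zero. -/

import Mathlib

open Matrix Complex Module


namespace SZD
variable {n : ℕ}

noncomputable def sqf (A : Matrix (Fin n) (Fin n) ℂ) (u w : Fin n → ℂ) : ℂ :=
  star u ⬝ᵥ A *ᵥ w

lemma sqf_add_left (A : Matrix (Fin n) (Fin n) ℂ) (u w x : Fin n → ℂ) :
    sqf A (u + w) x = sqf A u x + sqf A w x := by
  simp [sqf, add_dotProduct]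

lemma sqf_add_right (A : Matrix (Fin n) (Fin n) ℂ) (u w x : Fin n → ℂ) :
    sqf A x (u + w) = sqf A x u + sqf A x w := by
  simp [sqf, mulVec_add, dotProduct_add]

lemma sqf_smul_left (A : Matrix (Fin n) (Fin n) ℂ) (c : ℂ) (u x : Fin n → ℂ) :
    sqf A (c • u) x = (starRingEnd ℂ) c * sqf A u x := by
  simp [sqf, star_smul, smul_dotProduct]

lemma sqf_smul_right (A : Matrix (Fin n) (Fin n) ℂ) (c : ℂ) (u x : Fin n → ℂ) :
    sqf A x (c • u) = c * sqf A x u := by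
  simp [sqf, mulVec_smul, dotProduct_smul]

lemma sqf_sub_mat (A B : Matrix (Fin n) (Fin n) ℂ) (u x : Fin n → ℂ) :
    sqf (A - B) u x = sqf A u x - sqf B u x := by
  simp [sqf, sub_mulVec, dotProduct_sub]

lemma sqf_add_mat (A B : Matrix (Fin n) (Fin n) ℂ) (u x : Fin n → ℂ) :
    sqf (A + B) u x = sqf A u x + sqf B u x := by
  simp [sqf, add_mulVec, dotProduct_add]

lemma sqf_smul_mat (c : ℂ) (A : Matrix (Fin n) (Fin n) ℂ) (u x : Fin n → ℂ) :
    sqf (c • A) u x = c * sqf A u x := by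
  simp [sqf, smul_mulVec, dotProduct_smul]

lemma sqf_one (u x : Fin n → ℂ) : sqf 1 u x = star u ⬝ᵥ x := by
  simp [sqf, one_mulVec]

lemma dot_conj_symm (u x : Fin n → ℂ) :
    star u ⬝ᵥ x = (starRingEnd ℂ) (star x ⬝ᵥ u) := by
  simp [dotProduct, mul_comm, map_sum]

lemma dot_self_eq (v : Fin n → ℂ) :
    star v ⬝ᵥ v = ((∑ i, Complex.normSq (v i) : ℝ) : ℂ) := by
  push_cast
  simp [dotProduct, Complex.normSq_eq_conj_mul_self]

/-- generic expansion of the sesquilinear form on a combination -/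
lemma sqf_expand (M : Matrix (Fin n) (Fin n) ℂ) (c d : ℂ) (u v : Fin n → ℂ) :
    sqf M (c • u + d • v) (c • u + d • v)
      = (starRingEnd ℂ) c * c * sqf M u u + (starRingEnd ℂ) c * d * sqf M u v
        + (starRingEnd ℂ) d * c * sqf M v u + (starRingEnd ℂ) d * d * sqf M v v := by
  simp only [sqf_add_left, sqf_add_right, sqf_smul_left, sqf_smul_right]
  ring

/-- The key Toeplitz–Hausdorff style lemma: the numerical range is closed
under real convex combinations. -/
lemma segment_mem (A : Matrix (Fin n) (Fin n) ℂ) (x y : Fin n → ℂ)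
    (hx : star x ⬝ᵥ x = 1) (hy : star y ⬝ᵥ y = 1)
    (a b : ℝ) (ha : 0 ≤ a) (hb : 0 ≤ b) (hab : a + b = 1) :
    ∃ v : Fin n → ℂ, star v ⬝ᵥ v = 1 ∧
      sqf A v v = (a:ℂ) * sqf A x x + (b:ℂ) * sqf A y y := by
  set α := sqf A x x with hα
  set β := sqf A y y with hβ
  have hab' : (a:ℂ) + (b:ℂ) = 1 := by exact_mod_cast congrArg (Complex.ofReal) hab
  by_cases hαβ : α = β
  · refine ⟨x, hx, ?_⟩
    rw [← hα, hαβ]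
    linear_combination (-β) * hab'
  · have hαβ' : α - β ≠ 0 := sub_ne_zero.mpr hαβ
    set B : Matrix (Fin n) (Fin n) ℂ := (α - β)⁻¹ • (A - β • 1) with hB
    have hBx : sqf B x x = 1 := by
      rw [hB, sqf_smul_mat, sqf_sub_mat, sqf_smul_mat, sqf_one, hx, ← hα]
      field_simp
    have hBy : sqf B y y = 0 := by
      rw [hB, sqf_smul_mat, sqf_sub_mat, sqf_smul_mat, sqf_one, hy, ← hβ]
      simp
    -- phase choice
    set p := sqf B x y with hp
    set qq := sqf B y x with hq
    set w := p - (starRingEnd ℂ) qq with hw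
    set u : ℂ := if w = 0 then 1 else (starRingEnd ℂ) w / ((‖w‖ : ℝ) : ℂ) with hu
    have huabs : ‖u‖ = 1 := by
      rw [hu]; split_ifs with h
      · simp
      · rw [norm_div, Complex.norm_conj, Complex.norm_real, norm_norm,
          div_self (norm_ne_zero_iff.mpr h)]
    have huu : (starRingEnd ℂ) u * u = 1 := by
      rw [mul_comm, Complex.mul_conj]
      norm_cast
      rw [Complex.normSq_eq_norm_sq, huabs]; norm_num
    have huw : (u * w).im = 0 := by
      rw [hu]; split_ifs with h
      · simp [h]
      · rw [div_mul_eq_mul_div, mul_comm, Complex.mul_conj]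
        norm_cast
    -- the rotated second vector
    set y' : Fin n → ℂ := u • y with hy'def
    have hy'1 : star y' ⬝ᵥ y' = 1 := by
      have : star y' ⬝ᵥ y' = (starRingEnd ℂ) u * u * (star y ⬝ᵥ y) := by
        simp [hy'def, star_smul, smul_dotProduct, dotProduct_smul]; ring
      rw [this, hy, huu, mul_one]
    have hBy' : sqf B y' y' = 0 := by
      rw [hy'def, sqf_smul_left, sqf_smul_right, hBy]; ring
    have hBxy' : sqf B x y' = u * p := by rw [hy'def, sqf_smul_right, ← hp]
    have hBy'x : sqf B y' x = (starRingEnd ℂ) u * qq := by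
      rw [hy'def, sqf_smul_left, ← hq]
    set c := u * p + (starRingEnd ℂ) u * qq with hc
    have hcim : c.im = 0 := by
      have h1 : c = u * w + ((starRingEnd ℂ) u * qq + u * (starRingEnd ℂ) qq) := by
        rw [hc, hw]
        ring
      have h2 : ((starRingEnd ℂ) u * qq + u * (starRingEnd ℂ) qq).im = 0 := by
        simp only [Complex.add_im, Complex.mul_im, Complex.conj_re, Complex.conj_im]
        ring
      rw [h1, Complex.add_im, huw, h2, add_zero]
    have hcre : ((c.re : ℝ) : ℂ) = c := Complex.ext (by simp) (by simp [hcim])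
    set e := star x ⬝ᵥ y' with he
    have hd : ((2 * e.re : ℝ) : ℂ) = e + (starRingEnd ℂ) e := by
      rw [Complex.add_conj]
    -- the path
    have hnum : ∀ t : ℝ, sqf B (((1-t : ℝ) : ℂ) • y' + ((t:ℝ) : ℂ) • x)
        (((1-t : ℝ) : ℂ) • y' + ((t:ℝ) : ℂ) • x) = ((t^2 + t*(1-t)*c.re : ℝ) : ℂ) := by
      intro t
      rw [sqf_expand, hBy', hBx, hBxy', hBy'x, Complex.conj_ofReal, Complex.conj_ofReal]
      rw [show ((t^2 + t*(1-t)*c.re : ℝ) : ℂ)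
          = ((t:ℝ):ℂ)^2 + ((t:ℝ):ℂ)*((1-t : ℝ):ℂ)*((c.re:ℝ):ℂ) by push_cast; ring]
      rw [hcre, hc]
      ring
    have hden : ∀ t : ℝ, star (((1-t : ℝ) : ℂ) • y' + ((t:ℝ) : ℂ) • x) ⬝ᵥ
        (((1-t : ℝ) : ℂ) • y' + ((t:ℝ) : ℂ) • x)
        = (((1-t)^2 + t^2 + t*(1-t)*(2*e.re) : ℝ) : ℂ) := by
      intro t
      rw [← sqf_one, sqf_expand, sqf_one, sqf_one, sqf_one, sqf_one, hy'1, hx,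
        Complex.conj_ofReal, Complex.conj_ofReal, ← he, dot_conj_symm y' x, ← he]
      rw [show (((1-t)^2 + t^2 + t*(1-t)*(2*e.re) : ℝ) : ℂ)
        = ((1-t : ℝ):ℂ)^2 + ((t:ℝ):ℂ)^2 + ((t:ℝ):ℂ)*((1-t:ℝ):ℂ)*(((2*e.re : ℝ)):ℂ) by push_cast; ring]
      rw [hd]
      ring
    -- positivity of the denominator
    have hpos : ∀ t ∈ Set.Icc (0:ℝ) 1, 0 < (1-t)^2 + t^2 + t*(1-t)*(2*e.re) := by
      intro t ht
      have h2 : ((1-t)^2 + t^2 + t*(1-t)*(2*e.re) : ℝ)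
          = ∑ i, Complex.normSq ((((1-t : ℝ) : ℂ) • y' + ((t:ℝ) : ℂ) • x) i) := by
        have := (hden t).symm.trans (dot_self_eq _)
        exact_mod_cast this
      rw [h2]
      rcases (Finset.sum_nonneg (fun i _ => Complex.normSq_nonneg _)).lt_or_eq with h | h
      · exact h
      · exfalso
        have hz0 : (((1-t : ℝ) : ℂ) • y' + ((t:ℝ) : ℂ) • x) = 0 := by
          funext i
          have := (Finset.sum_eq_zero_iff_of_nonneg
            (fun i _ => Complex.normSq_nonneg ((((1-t : ℝ) : ℂ) • y' + ((t:ℝ) : ℂ) • x) i))).mp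
            h.symm i (Finset.mem_univ i)
          exact Complex.normSq_eq_zero.mp this
        rcases eq_or_lt_of_le ht.2 with h1 | h1
        · -- t = 1 : the vector is x
          have hx0 : x = 0 := by
            rw [h1] at hz0
            simpa using hz0
          rw [hx0] at hx; simp at hx
        · -- t < 1
          have h1t : (1 - t : ℝ) ≠ 0 := by linarith
          have h1tC : (1 - (t:ℂ)) ≠ 0 := by
            intro hcon
            apply h1t
            have : ((1 - t : ℝ) : ℂ) = 0 := by push_cast; exact hcon
            exact_mod_cast this
          have hy'x : y' = ((-t/(1-t) : ℝ) : ℂ) • x := by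
            funext i
            have h3 := congrFun hz0 i
            simp only [Pi.add_apply, Pi.smul_apply, Pi.zero_apply, smul_eq_mul] at h3
            simp only [Pi.smul_apply, smul_eq_mul]
            push_cast at h3 ⊢
            field_simp
            linear_combination h3
          have ht0 : t = 0 := by
            have h4 : (0:ℂ) = ((-t/(1-t) : ℝ) : ℂ)^2 := by
              rw [← hBy', hy'x, sqf_smul_left, sqf_smul_right, hBx, Complex.conj_ofReal]
              ring
            have h5 : ((-t/(1-t) : ℝ) : ℂ) = 0 := by
              have := h4.symm
              exact pow_eq_zero_iff (two_ne_zero) |>.mp this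
            have h6 : (-t/(1-t) : ℝ) = 0 := by exact_mod_cast h5
            rcases div_eq_zero_iff.mp h6 with h7 | h7
            · linarith
            · exact absurd h7 h1t
          have hy'0 : y' = 0 := by rw [hy'x, ht0]; simp
          rw [hy'0] at hy'1; simp at hy'1
    -- IVT
    obtain ⟨t, htI, hft⟩ : ∃ t ∈ Set.Icc (0:ℝ) 1,
        (t^2 + t*(1-t)*c.re) / ((1-t)^2 + t^2 + t*(1-t)*(2*e.re)) = a := by
      have hcont : ContinuousOn
          (fun t : ℝ => (t^2 + t*(1-t)*c.re) / ((1-t)^2 + t^2 + t*(1-t)*(2*e.re)))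
          (Set.Icc 0 1) := by
        apply ContinuousOn.div
        · fun_prop
        · fun_prop
        · exact fun t ht => (hpos t ht).ne'
      have h01 := intermediate_value_Icc zero_le_one hcont
      norm_num at h01
      exact h01 ⟨ha, by linarith⟩
    -- the final vector
    set dent := (1-t)^2 + t^2 + t*(1-t)*(2*e.re) with hdent
    have hdpos : 0 < dent := hpos t htI
    set r := Real.sqrt dent with hr
    have hrpos : 0 < r := Real.sqrt_pos.mpr hdpos
    have hrr : r * r = dent := Real.mul_self_sqrt hdpos.le
    set v : Fin n → ℂ := ((r⁻¹ : ℝ) : ℂ) • (((1-t : ℝ) : ℂ) • y' + ((t:ℝ) : ℂ) • x) with hvdef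
    have hv1 : star v ⬝ᵥ v = 1 := by
      rw [hvdef, star_smul, smul_dotProduct, dotProduct_smul, hden t, ← hdent]
      have hstep : (r⁻¹ * (r⁻¹ * dent) : ℝ) = 1 := by
        field_simp
        linarith [hrr]
      calc star ((r⁻¹:ℝ):ℂ) * (((r⁻¹:ℝ):ℂ) * (dent:ℂ))
          = ((r⁻¹ * (r⁻¹ * dent) : ℝ) : ℂ) := by
            rw [Complex.star_def, Complex.conj_ofReal]; push_cast; ring
        _ = 1 := by rw [hstep]; norm_num
    have hBv : sqf B v v = (a:ℂ) := by
      rw [hvdef, sqf_smul_left, sqf_smul_right, hnum t, Complex.conj_ofReal]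
      have hstep2 : (r⁻¹ * (r⁻¹ * (t^2 + t*(1-t)*c.re)) : ℝ)
          = (t^2 + t*(1-t)*c.re) / ((1-t)^2 + t^2 + t*(1-t)*(2*e.re)) := by
        rw [← hdent, ← hrr]
        field_simp
      calc ((r⁻¹:ℝ):ℂ) * (((r⁻¹:ℝ):ℂ) * ((t^2 + t*(1-t)*c.re : ℝ):ℂ))
          = ((r⁻¹ * (r⁻¹ * (t^2 + t*(1-t)*c.re)) : ℝ) : ℂ) := by push_cast; ring
        _ = (a:ℂ) := by rw [hstep2, hft]
    refine ⟨v, hv1, ?_⟩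
    have hAv : sqf A v v = (α - β) * sqf B v v + β * (star v ⬝ᵥ v) := by
      have h9 : sqf (A - β • 1) v v = (α - β) * sqf B v v := by
        rw [hB, sqf_smul_mat, ← mul_assoc, mul_inv_cancel₀ hαβ', one_mul]
      have h10 : sqf (A - β • 1) v v = sqf A v v - β * (star v ⬝ᵥ v) := by
        rw [sqf_sub_mat, sqf_smul_mat, sqf_one]
      linear_combination h10.symm + h9
    rw [hAv, hBv, hv1]
    linear_combination (-β) * hab'
end SZD

namespace SZD2
open SZD

lemma exists_unit_vector {n : ℕ} (A : Matrix (Fin n) (Fin n) ℂ) (hn : n ≠ 0)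
    (htr : A.trace = 0) :
    ∃ v : Fin n → ℂ, star v ⬝ᵥ v = 1 ∧ star v ⬝ᵥ A *ᵥ v = 0 := by
  set S : Set ℂ := {z | ∃ v : Fin n → ℂ, star v ⬝ᵥ v = 1 ∧ sqf A v v = z} with hS
  have hconv : Convex ℝ S := by
    intro z₁ hz₁ z₂ hz₂ a b ha hb hab
    obtain ⟨x, hx, hxz⟩ := hz₁
    obtain ⟨y, hy, hyz⟩ := hz₂
    obtain ⟨v, hv, hval⟩ := segment_mem A x y hx hy a b ha hb hab
    refine ⟨v, hv, ?_⟩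
    rw [hval, hxz, hyz]
    simp [Complex.real_smul]
  have hdiag : ∀ i, A i i ∈ S := by
    intro i
    refine ⟨Pi.single i 1, ?_, ?_⟩
    · simp [dotProduct, Pi.single_apply, apply_ite]
    · simp [sqf, dotProduct, mulVec, Pi.single_apply, apply_ite, mul_comm]
  have h0 : (0:ℂ) ∈ S := by
    have hw : ∑ _i : Fin n, ((n:ℝ)⁻¹) = 1 := by
      rw [Finset.sum_const, Finset.card_univ, Fintype.card_fin]
      rw [nsmul_eq_mul, mul_inv_cancel₀ (by exact_mod_cast hn)]
    have := hconv.sum_mem (t := Finset.univ) (fun i _ => by positivity) hw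
      (fun i _ => hdiag i)
    have hsum : ∑ i : Fin n, ((n:ℝ)⁻¹) • A i i = 0 := by
      rw [← Finset.smul_sum]
      have : ∑ i : Fin n, A i i = 0 := htr
      rw [this, smul_zero]
    rwa [hsum] at this
  obtain ⟨v, hv, hval⟩ := h0
  exact ⟨v, hv, hval⟩
end SZD2

lemma exists_unitary_firstCol {n : ℕ} (v : Fin (n+1) → ℂ) (hv : star v ⬝ᵥ v = 1) :
    ∃ U : Matrix (Fin (n+1)) (Fin (n+1)) ℂ,
      U ∈ Matrix.unitaryGroup (Fin (n+1)) ℂ ∧ ∀ i, U i 0 = v i := by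
  set E := EuclideanSpace ℂ (Fin (n+1))
  set vE : E := WithLp.toLp 2 v with hvE
  have hinner : ∀ x y : E, inner ℂ x y = ∑ i, (starRingEnd ℂ) (x i) * y i := by
    intro x y
    rw [PiLp.inner_apply (𝕜 := ℂ)]
    simp only [RCLike.inner_apply']
  have hnorm : ‖vE‖ = 1 := by
    have h1 : inner ℂ vE vE = 1 := by
      rw [hinner]
      rw [← hv]
      simp [dotProduct, hvE]
    have h3 : (‖vE‖:ℝ)^2 = 1 := by
      rw [← inner_self_eq_norm_sq (𝕜 := ℂ) vE, h1]
      simp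
    nlinarith [norm_nonneg vE]
  have hON : Orthonormal ℂ (({0} : Set (Fin (n+1))).restrict (fun _ => vE)) := by
    constructor
    · intro i; exact hnorm
    · intro i j hij
      exact absurd (Subsingleton.elim i j) hij
  have hcard : finrank ℂ E = Fintype.card (Fin (n+1)) := by
    simp [E, finrank_euclideanSpace]
  obtain ⟨b, hb⟩ := hON.exists_orthonormalBasis_extension_of_card_eq hcard
  have hb0 : b 0 = vE := hb 0 rfl
  refine ⟨Matrix.of (fun i j => b j i), ?_, ?_⟩
  · rw [Matrix.mem_unitaryGroup_iff']
    ext i j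
    have := orthonormal_iff_ite.mp b.orthonormal i j
    rw [hinner] at this
    simp only [Matrix.mul_apply, Matrix.star_apply, Matrix.of_apply, Matrix.one_apply]
    simpa using this
  · intro i
    simp only [Matrix.of_apply]
    rw [hb0]

namespace SZD3
variable {n : ℕ}

noncomputable def emb (V : Matrix (Fin n) (Fin n) ℂ) :
    Matrix (Fin (n+1)) (Fin (n+1)) ℂ :=
  Matrix.of (fun i j =>
    Fin.cases (Fin.cases 1 (fun _ => 0) j) (fun i' => Fin.cases 0 (fun j' => V i' j') j) i)

@[simp] lemma emb_zz (V : Matrix (Fin n) (Fin n) ℂ) : emb V 0 0 = 1 := rfl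
@[simp] lemma emb_zs (V : Matrix (Fin n) (Fin n) ℂ) (j : Fin n) : emb V 0 j.succ = 0 := by
  simp [emb]
@[simp] lemma emb_sz (V : Matrix (Fin n) (Fin n) ℂ) (i : Fin n) : emb V i.succ 0 = 0 := by
  simp [emb]
@[simp] lemma emb_ss (V : Matrix (Fin n) (Fin n) ℂ) (i j : Fin n) :
    emb V i.succ j.succ = V i j := by
  simp [emb]

lemma conj_apply {m : ℕ} (M C : Matrix (Fin m) (Fin m) ℂ) (a b : Fin m) :
    (Mᴴ * C * M) a b = ∑ k, ∑ l, (starRingEnd ℂ) (M k a) * C k l * M l b := by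
  rw [Matrix.mul_apply]
  simp only [Matrix.mul_apply, Matrix.conjTranspose_apply, Finset.sum_mul]
  rw [Finset.sum_comm]
  simp [Complex.star_def]

lemma emb_unitary (V : Matrix (Fin n) (Fin n) ℂ) (hV : Vᴴ * V = 1) :
    (emb V)ᴴ * (emb V) = 1 := by
  ext i j
  rw [Matrix.mul_apply]
  simp only [Matrix.conjTranspose_apply, Complex.star_def]
  rw [Fin.sum_univ_succ]
  induction i using Fin.cases with
  | zero =>
    induction j using Fin.cases with
    | zero => simp [Matrix.one_apply]
    | succ j => simp [Matrix.one_apply, (Fin.succ_ne_zero j).symm]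
  | succ i =>
    induction j using Fin.cases with
    | zero => simp [Matrix.one_apply, Fin.succ_ne_zero i]
    | succ j =>
      have := congrFun (congrFun hV i) j
      rw [Matrix.mul_apply] at this
      simp only [Matrix.conjTranspose_apply, Complex.star_def] at this
      simp only [emb_zs, emb_ss, map_zero, zero_mul, zero_add]
      rw [this]
      simp [Matrix.one_apply, Fin.succ_inj]

lemma conj_emb_zero (V : Matrix (Fin n) (Fin n) ℂ) (C : Matrix (Fin (n+1)) (Fin (n+1)) ℂ) :
    ((emb V)ᴴ * C * emb V) 0 0 = C 0 0 := by
  rw [conj_apply]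
  rw [Fin.sum_univ_succ]
  simp [Fin.sum_univ_succ]

lemma conj_emb_succ (V : Matrix (Fin n) (Fin n) ℂ) (C : Matrix (Fin (n+1)) (Fin (n+1)) ℂ)
    (i : Fin n) :
    ((emb V)ᴴ * C * emb V) i.succ i.succ
      = (Vᴴ * (C.submatrix Fin.succ Fin.succ) * V) i i := by
  rw [conj_apply, conj_apply]
  rw [Fin.sum_univ_succ]
  simp [Fin.sum_univ_succ, Matrix.submatrix_apply]
end SZD3

open SZD SZD2 SZD3 in
theorem zero_diag (n : ℕ) : ∀ (A : Matrix (Fin n) (Fin n) ℂ), A.trace = 0 →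
    ∃ U ∈ Matrix.unitaryGroup (Fin n) ℂ, ∀ i, (Uᴴ * A * U) i i = 0 := by
  induction n with
  | zero => exact fun A _ => ⟨1, one_mem _, fun i => i.elim0⟩
  | succ n ih =>
    intro A htr
    obtain ⟨v, hv1, hv0⟩ := SZD2.exists_unit_vector A (Nat.succ_ne_zero n) htr
    obtain ⟨U₀, hU₀, hcol⟩ := exists_unitary_firstCol v hv1
    have hU₀'' : U₀ * U₀ᴴ = 1 := by
      have := (Matrix.mem_unitaryGroup_iff).mp hU₀
      rwa [Matrix.star_eq_conjTranspose] at this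
    set C := U₀ᴴ * A * U₀ with hC
    have hC00 : C 0 0 = 0 := by
      have h1 : ∑ k, ∑ l, (starRingEnd ℂ) (U₀ k 0) * A k l * U₀ l 0 = star v ⬝ᵥ A *ᵥ v := by
        simp [dotProduct, mulVec, Finset.mul_sum, hcol, Complex.star_def, mul_assoc]
      rw [hC, conj_apply, h1, hv0]
    have htrC : C.trace = A.trace := by
      rw [hC, Matrix.trace_mul_comm, ← Matrix.mul_assoc, hU₀'', Matrix.one_mul]
    set B := C.submatrix Fin.succ Fin.succ with hB
    have htrB : B.trace = 0 := by
      have h2 : C.trace = C 0 0 + ∑ i : Fin n, C i.succ i.succ := Fin.sum_univ_succ _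
      have h3 : B.trace = ∑ i : Fin n, C i.succ i.succ := by
        rw [Matrix.trace]
        simp [hB, Matrix.diag, Matrix.submatrix_apply]
      rw [h3]
      rw [htrC, htr, hC00, zero_add] at h2
      exact h2.symm
    obtain ⟨V, hV, hVd⟩ := ih B htrB
    have hVu : Vᴴ * V = 1 := by
      have := (Matrix.mem_unitaryGroup_iff').mp hV
      rwa [Matrix.star_eq_conjTranspose] at this
    refine ⟨U₀ * emb V, ?_, ?_⟩
    · refine mul_mem hU₀ ?_
      rw [Matrix.mem_unitaryGroup_iff', Matrix.star_eq_conjTranspose]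
      exact emb_unitary V hVu
    · intro i
      have hsplit : (U₀ * emb V)ᴴ * A * (U₀ * emb V) = (emb V)ᴴ * C * emb V := by
        rw [Matrix.conjTranspose_mul, hC]
        simp only [Matrix.mul_assoc]
      rw [hsplit]
      induction i using Fin.cases with
      | zero => rw [conj_emb_zero]; exact hC00
      | succ i => rw [conj_emb_succ]; exact hVd i

open Matrix

/-- Any two traceless Hermitian matrices can be simultaneously zero-diagonalized
by a unitary. -/
theorem simultaneous_zero_diagonalization (d : ℕ)
    (M₁ M₂ : Matrix (Fin d) (Fin d) ℂ)
    (h₁ : M₁.IsHermitian) (h₂ : M₂.IsHermitian)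
    (t₁ : M₁.trace = 0) (t₂ : M₂.trace = 0) :
    ∃ U : Matrix (Fin d) (Fin d) ℂ,
      U ∈ Matrix.unitaryGroup (Fin d) ℂ ∧
      (∀ i, (Uᴴ * M₁ * U) i i = 0) ∧
      (∀ i, (Uᴴ * M₂ * U) i i = 0) := by
  have htr : (M₁ + Complex.I • M₂).trace = 0 := by
    rw [Matrix.trace_add, Matrix.trace_smul, t₁, t₂]
    simp
  obtain ⟨U, hU, hdiag⟩ := zero_diag d (M₁ + Complex.I • M₂) htr
  have hcombo : ∀ i, (Uᴴ*M₁*U) i i + Complex.I * (Uᴴ*M₂*U) i i = 0 := by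
    intro i
    have h0 := hdiag i
    have he : Uᴴ * (M₁ + Complex.I • M₂) * U = Uᴴ*M₁*U + Complex.I • (Uᴴ*M₂*U) := by
      rw [Matrix.mul_add, Matrix.add_mul, mul_smul_comm, smul_mul_assoc]
    rw [he] at h0
    simpa using h0
  have hreal : ∀ (M : Matrix (Fin d) (Fin d) ℂ), M.IsHermitian →
      ∀ i, (starRingEnd ℂ) ((Uᴴ*M*U) i i) = (Uᴴ*M*U) i i := by
    intro M hM i
    have hH : (Uᴴ*M*U)ᴴ = Uᴴ*M*U := by
      rw [Matrix.conjTranspose_mul, Matrix.conjTranspose_mul,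
        Matrix.conjTranspose_conjTranspose, hM.eq, Matrix.mul_assoc]
    have h5 := congrFun (congrFun hH i) i
    rwa [Matrix.conjTranspose_apply, Complex.star_def] at h5
  refine ⟨U, hU, fun i => ?_, fun i => ?_⟩
  · have h1 := hcombo i
    have h2 := congrArg (starRingEnd ℂ) h1
    simp only [_root_.map_add, _root_.map_mul, Complex.conj_I, _root_.map_zero,
      hreal M₁ h₁ i, hreal M₂ h₂ i] at h2
    linear_combination (h1 + h2) / 2
  · have h1 := hcombo i
    have h2 := congrArg (starRingEnd ℂ) h1
    simp only [_root_.map_add, _root_.map_mul, Complex.conj_I, _root_.map_zero,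
      hreal M₁ h₁ i, hreal M₂ h₂ i] at h2
    linear_combination (-Complex.I/2) * (h1 - h2) + ((Uᴴ*M₂*U) i i) * Complex.I_sq
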